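/- (Proposition 4.1) For every (α+, α-, β+, β-, ϑ, ξ) ∈ ℝ⁶ satisfying α+*α- = 0, α+*(ξ+ϑ) = 0, α-*(ξ-ϑ) = 0, the element r = -α+ D∧P - α- D∧K + β+ P∧M + β- K∧M - ϑ D∧M + ξ P∧K makes the coboundary cocommutator δ_r a Lie bialgebra cocommutator on S, and δ_r(D) = α+ D∧P - α- D∧K - β+ P∧M + β- K∧M, δ_r(P) = α-(D∧M - P∧K) - (ϑ+ξ) P∧M, δ_r(K) = -α+(D∧M + P∧K) + (ϑ-ξ) K∧M, δ_r(M) = 0 (so the harmonic oscillator subalgebra span{D,P,K,M} is a Lie sub-bialgebra), with δ_r(H) = 2α+ P∧H + α-(D∧P + 2 K∧H) - β- P∧M - 2ϑ H∧M and δ_r(C) = -2α- K∧C - α+(D∧K + 2 P∧C) + β+ K∧M + 2ϑ C∧M; moreover [[r,r]] = (α+*β- + α-*β+ - ξ^2) K∧M∧P. -/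

import Mathlib

open TensorProduct

noncomputable section

variable (L : Type) [LieRing L] [LieAlgebra ℝ L]

/-- The wedge X∧Y = X⊗Y - Y⊗X in S⊗S. -/
def wedge (X Y : L) : L ⊗[ℝ] L := X ⊗ₜ[ℝ] Y - Y ⊗ₜ[ℝ] X

/-- The adjoint action of X on S⊗S: X·r = (ad_X⊗id + id⊗ad_X)(r). -/
def act (X : L) : (L ⊗[ℝ] L) →ₗ[ℝ] (L ⊗[ℝ] L) :=
  LinearMap.rTensor L (LieAlgebra.ad ℝ L X) + LinearMap.lTensor L (LieAlgebra.ad ℝ L X)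

/-- S∧S: the span of wedges, i.e. the skew-symmetric part of S⊗S. -/
def skewPart : Submodule ℝ (L ⊗[ℝ] L) :=
  Submodule.span ℝ {w | ∃ X Y : L, w = wedge L X Y}

/-- 1-cocycle condition. -/
def IsCocycle (δ : L → L ⊗[ℝ] L) : Prop :=
  ∀ X Y : L, δ ⁅X, Y⁆ = act L X (δ Y) - act L Y (δ X)

/-- The coboundary cocommutator δ_r(X) = X·r, as a linear map. -/
def cobdry (r : L ⊗[ℝ] L) : L →ₗ[ℝ] L ⊗[ℝ] L where
  toFun X := act L X r
  map_add' X Y := by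
    have h : LieAlgebra.ad ℝ L (X + Y) = LieAlgebra.ad ℝ L X + LieAlgebra.ad ℝ L Y :=
      map_add (LieAlgebra.ad ℝ L) X Y
    simp only [act, h, LinearMap.rTensor_add, LinearMap.lTensor_add, LinearMap.add_apply]
    abel
  map_smul' c X := by
    have h : LieAlgebra.ad ℝ L (c • X) = c • LieAlgebra.ad ℝ L X := map_smul (LieAlgebra.ad ℝ L) c X
    simp only [act, h, LinearMap.rTensor_smul, LinearMap.lTensor_smul, LinearMap.add_apply,
      LinearMap.smul_apply, RingHom.id_apply, smul_add]

/-- The cyclic permutation ζ : x⊗y⊗z ↦ z⊗x⊗y on (S⊗S)⊗S. -/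
def zeta : ((L ⊗[ℝ] L) ⊗[ℝ] L) →ₗ[ℝ] ((L ⊗[ℝ] L) ⊗[ℝ] L) :=
  ((TensorProduct.assoc ℝ L L L).symm.toLinearMap).comp
    ((TensorProduct.comm ℝ (L ⊗[ℝ] L) L).toLinearMap)

/-- The co-Jacobi identity for a linear map δ : S → S⊗S. -/
def CoJacobi (δ : L →ₗ[ℝ] L ⊗[ℝ] L) : Prop :=
  ∀ X : L,
    ((LinearMap.id : ((L ⊗[ℝ] L) ⊗[ℝ] L) →ₗ[ℝ] ((L ⊗[ℝ] L) ⊗[ℝ] L)) + zeta L +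
      zeta L ∘ₗ zeta L) (LinearMap.rTensor L δ (δ X)) = 0

/-- A Lie bialgebra cocommutator: skew-symmetric-valued 1-cocycle satisfying co-Jacobi. -/
def IsBialgCocomm (δ : L →ₗ[ℝ] L ⊗[ℝ] L) : Prop :=
  (∀ X : L, δ X ∈ skewPart L) ∧ IsCocycle L ⇑δ ∧ CoJacobi L δ

/-- The general 15-parameter skew-symmetric element r(a,b,c) of S⊗S. -/
def rGen (D H P K C M : L) (a1 a2 a3 a4 a5 a6 b1 b2 b3 b4 b5 b6 c1 c2 c3 : ℝ) :
    L ⊗[ℝ] L :=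
  a1 • wedge L D P + a2 • wedge L D H + a3 • wedge L P M + a4 • wedge L H M +
    a5 • wedge L P H + a6 • wedge L P C + b1 • wedge L D K + b2 • wedge L D C +
    b3 • wedge L K M + b4 • wedge L C M + b5 • wedge L K C + b6 • wedge L K H +
    c1 • wedge L D M + c2 • wedge L P K + c3 • wedge L H C

/-- The 19 Schrödinger bialgebra equations. -/
def Eqs19 (a1 a2 a3 a4 a5 a6 b1 b2 b3 b4 b5 b6 c1 c2 c3 : ℝ) : Prop :=
  a6^2 + a6*b1 - 3*a1*b5 + b5*b6 = 0 ∧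
  a2*a3 - 2*a1*a4 - a4*b6 - 3*a5*c1 + a5*c2 = 0 ∧
  a1*a2 + a2*b6 - a5*c3 = 0 ∧
  a5*b1 - a1*b6 - 2*a2*c1 - a4*c3 = 0 ∧
  a4*a6 + a4*b1 - a2*b3 - a5*b4 + a1*c1 - a1*c2 = 0 ∧
  3*a1*b2 - a2*b5 + a6*c3 + b1*c3 = 0 ∧
  a3*b2 + 2*a1*b4 - a4*b5 + a6*c1 + a6*c2 + b3*c3 = 0 ∧
  3*a2*b5 + b2*b6 - a6*c3 = 0 ∧
  b6^2 + b6*a1 - 3*b1*a5 + a5*a6 = 0 ∧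
  b2*b3 - 2*b1*b4 - b4*a6 - 3*b5*c1 - b5*c2 = 0 ∧
  b1*b2 + b2*a6 + b5*c3 = 0 ∧
  b5*a1 - b1*a6 - 2*b2*c1 + b4*c3 = 0 ∧
  b4*b6 + b4*a1 - b2*a3 - b5*a4 + b1*c1 + b1*c2 = 0 ∧
  3*b1*a2 - b2*a5 - b6*c3 - a1*c3 = 0 ∧
  b3*a2 + 2*b1*a4 - b4*a5 + b6*c1 - b6*c2 - a3*c3 = 0 ∧
  3*b2*a5 + a2*a6 + b6*c3 = 0 ∧
  4*a2*b2 + c3^2 = 0 ∧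
  2*a4*b2 + 2*a2*b4 + a5*b5 - a6*b6 = 0 ∧
  2*a1*b1 - a1*a6 - b1*b6 + a5*b5 - a6*b6 = 0

/-- Full antisymmetrization X∧Y∧Z in (S⊗S)⊗S. -/
def wedge3 (X Y Z : L) : (L ⊗[ℝ] L) ⊗[ℝ] L :=
  (X ⊗ₜ[ℝ] Y) ⊗ₜ[ℝ] Z - (X ⊗ₜ[ℝ] Z) ⊗ₜ[ℝ] Y - (Y ⊗ₜ[ℝ] X) ⊗ₜ[ℝ] Z +
    (Y ⊗ₜ[ℝ] Z) ⊗ₜ[ℝ] X + (Z ⊗ₜ[ℝ] X) ⊗ₜ[ℝ] Y - (Z ⊗ₜ[ℝ] Y) ⊗ₜ[ℝ] X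

/-- The Schouten bracket [[r,r]], written in coordinates w.r.t. a basis. -/
def schouten (B : Module.Basis (Fin 6) ℝ L) (r : L ⊗[ℝ] L) : (L ⊗[ℝ] L) ⊗[ℝ] L :=
  ∑ i : Fin 6, ∑ j : Fin 6, ∑ k : Fin 6, ∑ l : Fin 6,
    (((B.tensorProduct B).repr r (i, j)) * ((B.tensorProduct B).repr r (k, l))) •
      ((⁅B i, B k⁆ ⊗ₜ[ℝ] B j) ⊗ₜ[ℝ] B l + (B i ⊗ₜ[ℝ] ⁅B j, B k⁆) ⊗ₜ[ℝ] B l +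
        (B i ⊗ₜ[ℝ] B k) ⊗ₜ[ℝ] ⁅B j, B l⁆)

/-- The adjoint-invariant elements of S⊗S. -/
def invariants : Submodule ℝ (L ⊗[ℝ] L) where
  carrier := {η | ∀ X : L, act L X η = 0}
  add_mem' := by
    intro a b ha hb X
    simp [map_add, ha X, hb X]
  zero_mem' := by intro X; simp
  smul_mem' := by
    intro c a ha X
    simp [map_smul, ha X]

/-- The space of skew-symmetric-valued 1-cocycles on S. -/
def cocycleSpace : Submodule ℝ (L →ₗ[ℝ] (L ⊗[ℝ] L)) where
  carrier := {δ | (∀ X : L, δ X ∈ skewPart L) ∧ IsCocycle L ⇑δ}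
  add_mem' := by
    rintro a b ⟨ha1, ha2⟩ ⟨hb1, hb2⟩
    refine ⟨fun X => add_mem (ha1 X) (hb1 X), fun X Y => ?_⟩
    simp only [LinearMap.add_apply, ha2 X Y, hb2 X Y, map_add]
    abel
  zero_mem' := by
    refine ⟨fun X => zero_mem _, fun X Y => ?_⟩
    simp
  smul_mem' := by
    rintro c a ⟨ha1, ha2⟩
    refine ⟨fun X => Submodule.smul_mem _ c (ha1 X), fun X Y => ?_⟩
    simp only [LinearMap.smul_apply, ha2 X Y, map_smul, smul_sub]

end

section helperLemmas
variable (L : Type) [LieRing L] [LieAlgebra ℝ L]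

lemma cobdry_apply' (r : L ⊗[ℝ] L) (X : L) : cobdry L r X = act L X r := rfl

lemma act_tmul' (X a b : L) : act L X (a ⊗ₜ[ℝ] b) = ⁅X,a⁆ ⊗ₜ[ℝ] b + a ⊗ₜ[ℝ] ⁅X,b⁆ := by
  simp only [act, LinearMap.add_apply, LinearMap.rTensor_tmul, LinearMap.lTensor_tmul,
    LieAlgebra.ad_apply]

lemma act_wedge' (X a b : L) : act L X (wedge L a b) = wedge L ⁅X,a⁆ b + wedge L a ⁅X,b⁆ := by
  simp only [wedge, map_sub, act_tmul']; abel

lemma wedge_smul_left' (c : ℝ) (a b : L) : wedge L (c • a) b = c • wedge L a b := by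
  simp only [wedge, smul_tmul', tmul_smul, smul_sub]

lemma wedge_smul_right' (c : ℝ) (a b : L) : wedge L a (c • b) = c • wedge L a b := by
  simp only [wedge, smul_tmul', tmul_smul, smul_sub]

lemma wedge_zero' (a : L) : wedge L a 0 = 0 := by simp [wedge]
lemma zero_wedge' (a : L) : wedge L 0 a = 0 := by simp [wedge]
lemma wedge_neg' (a b : L) : wedge L a (-b) = - wedge L a b := by
  simp only [wedge, tmul_neg, neg_tmul, neg_sub_neg]; abel
lemma neg_wedge' (a b : L) : wedge L (-a) b = - wedge L a b := by
  simp only [wedge, tmul_neg, neg_tmul, neg_sub_neg]; abel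

lemma act_lie' (X Y : L) :
    act L ⁅X, Y⁆ = act L X ∘ₗ act L Y - act L Y ∘ₗ act L X := by
  apply TensorProduct.ext'
  intro a b
  simp only [LinearMap.sub_apply, LinearMap.comp_apply, act_tmul', map_add, lie_lie,
    sub_tmul, tmul_sub]
  abel

lemma act_skew' (X : L) {w : L ⊗[ℝ] L} (hw : w ∈ skewPart L) : act L X w ∈ skewPart L := by
  induction hw using Submodule.span_induction with
  | mem w hw =>
      obtain ⟨a, b, rfl⟩ := hw
      rw [act_wedge']
      exact add_mem (Submodule.subset_span ⟨_, _, rfl⟩) (Submodule.subset_span ⟨_, _, rfl⟩)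
  | zero => simp only [map_zero]; exact zero_mem _
  | add x y _ _ hx hy => rw [map_add]; exact add_mem hx hy
  | smul c x _ hx => rw [map_smul]; exact Submodule.smul_mem _ _ hx

lemma zeta_tmul' (x y z : L) : zeta L ((x ⊗ₜ[ℝ] y) ⊗ₜ[ℝ] z) = (z ⊗ₜ[ℝ] x) ⊗ₜ[ℝ] y := by
  simp [zeta]

lemma basisTP' (B : Module.Basis (Fin 6) ℝ L) (a b i j : Fin 6) :
    ((B.tensorProduct B).repr (B a ⊗ₜ[ℝ] B b)) (i, j) =
      (if a = i then (1:ℝ) else 0) * (if b = j then (1:ℝ) else 0) := by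
  simp [Module.Basis.tensorProduct_repr_tmul_apply, Module.Basis.repr_self, Finsupp.single_apply]
  by_cases h : a = i <;> by_cases h' : b = j <;> simp [h, h']

end helperLemmas

set_option maxHeartbeats 4000000
theorem statement12 (L : Type) [LieRing L] [LieAlgebra ℝ L]
    (D H P K C M : L) (B : Module.Basis (Fin 6) ℝ L)
    (hB : ⇑B = ![D, H, P, K, C, M])
    (hDP : ⁅D, P⁆ = -P) (hDK : ⁅D, K⁆ = K) (hKP : ⁅K, P⁆ = M)
    (hDH : ⁅D, H⁆ = (-2 : ℝ) • H) (hDC : ⁅D, C⁆ = (2 : ℝ) • C) (hHC : ⁅H, C⁆ = D)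
    (hKH : ⁅K, H⁆ = P) (hPC : ⁅P, C⁆ = -K) (hKC : ⁅K, C⁆ = 0) (hPH : ⁅P, H⁆ = 0)
    (hM : ∀ X : L, ⁅M, X⁆ = 0)
    (alphap alpham betap betam th xi : ℝ)
    (h1 : alphap*alpham = 0) (h2 : alphap*(xi + th) = 0) (h3 : alpham*(xi - th) = 0)
    (r : L ⊗[ℝ] L)
    (hr : r = -(alphap • wedge L D P) - alpham • wedge L D K + betap • wedge L P M +
      betam • wedge L K M - th • wedge L D M + xi • wedge L P K) :
    IsBialgCocomm L (cobdry L r) ∧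
    cobdry L r D = alphap • wedge L D P - alpham • wedge L D K - betap • wedge L P M +
      betam • wedge L K M ∧
    cobdry L r P = alpham • (wedge L D M - wedge L P K) - (th + xi) • wedge L P M ∧
    cobdry L r K = -(alphap • (wedge L D M + wedge L P K)) + (th - xi) • wedge L K M ∧
    cobdry L r M = 0 ∧
    cobdry L r H = (2*alphap) • wedge L P H +
      alpham • (wedge L D P + (2:ℝ) • wedge L K H) - betam • wedge L P M -
      (2*th) • wedge L H M ∧
    cobdry L r C = -((2*alpham) • wedge L K C) -
      alphap • (wedge L D K + (2:ℝ) • wedge L P C) + betap • wedge L K M +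
      (2*th) • wedge L C M ∧
    schouten L B r = (alphap*betam + alpham*betap - xi^2) • wedge3 L K M P := by
  have hM' : ∀ X : L, ⁅X, M⁆ = 0 := fun X => by rw [← lie_skew, hM]; simp
  have hPD : ⁅P, D⁆ = P := by rw [← lie_skew, hDP]; simp
  have hKD : ⁅K, D⁆ = -K := by rw [← lie_skew, hDK]
  have hPK : ⁅P, K⁆ = -M := by rw [← lie_skew, hKP]
  have hHD : ⁅H, D⁆ = (2:ℝ) • H := by rw [← lie_skew, hDH]; module
  have hCD : ⁅C, D⁆ = (-2:ℝ) • C := by rw [← lie_skew, hDC]; module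
  have hCH : ⁅C, H⁆ = -D := by rw [← lie_skew, hHC]
  have hHK : ⁅H, K⁆ = -P := by rw [← lie_skew, hKH]
  have hCP : ⁅C, P⁆ = K := by rw [← lie_skew, hPC]; simp
  have hCK : ⁅C, K⁆ = 0 := by rw [← lie_skew, hKC]; simp
  have hHP : ⁅H, P⁆ = 0 := by rw [← lie_skew, hPH]; simp
  have hB0 : B 0 = D := by rw [hB]; rfl
  have hB1 : B 1 = H := by rw [hB]; rfl
  have hB2 : B 2 = P := by rw [hB]; rfl
  have hB3 : B 3 = K := by rw [hB]; rfl
  have hB4 : B 4 = C := by rw [hB]; rfl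
  have hB5 : B 5 = M := by rw [hB]; rfl
  have hsplit : (alphap = 0 ∧ alpham = 0) ∨ (alphap = 0 ∧ xi = th) ∨
      (alpham = 0 ∧ xi = -th) := by
    rcases mul_eq_zero.mp h1 with hp | hm
    · rcases mul_eq_zero.mp h3 with hm | hx
      · exact Or.inl ⟨hp, hm⟩
      · exact Or.inr (Or.inl ⟨hp, sub_eq_zero.mp hx⟩)
    · rcases mul_eq_zero.mp h2 with hp | hx
      · exact Or.inl ⟨hp, hm⟩
      · exact Or.inr (Or.inr ⟨hm, eq_neg_of_add_eq_zero_left hx⟩)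
  have hdD : cobdry L r D = alphap • wedge L D P - alpham • wedge L D K - betap • wedge L P M +
      betam • wedge L K M := by
    rw [cobdry_apply', hr]
    simp only [map_add, map_sub, map_neg, map_smul, act_wedge', hDP, hDK, hKP, hDH, hDC, hHC, hKH, hPC, hKC, hPH, hM, hM', hPD, hKD, hPK, hHD, hCD, hCH, hHK, hCP, hCK, hHP, lie_self, wedge_zero',
      zero_wedge', wedge_neg', neg_wedge', wedge_smul_left', wedge_smul_right', smul_neg,
      smul_zero, neg_zero, add_zero, zero_add, sub_zero, zero_sub, neg_neg]
    all_goals simp only [wedge]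
    all_goals module
  have hdP : cobdry L r P = alpham • (wedge L D M - wedge L P K) - (th + xi) • wedge L P M := by
    rw [cobdry_apply', hr]
    simp only [map_add, map_sub, map_neg, map_smul, act_wedge', hDP, hDK, hKP, hDH, hDC, hHC, hKH, hPC, hKC, hPH, hM, hM', hPD, hKD, hPK, hHD, hCD, hCH, hHK, hCP, hCK, hHP, lie_self, wedge_zero',
      zero_wedge', wedge_neg', neg_wedge', wedge_smul_left', wedge_smul_right', smul_neg,
      smul_zero, neg_zero, add_zero, zero_add, sub_zero, zero_sub, neg_neg]
    all_goals simp only [wedge]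
    all_goals module
  have hdK : cobdry L r K = -(alphap • (wedge L D M + wedge L P K)) + (th - xi) • wedge L K M := by
    rw [cobdry_apply', hr]
    simp only [map_add, map_sub, map_neg, map_smul, act_wedge', hDP, hDK, hKP, hDH, hDC, hHC, hKH, hPC, hKC, hPH, hM, hM', hPD, hKD, hPK, hHD, hCD, hCH, hHK, hCP, hCK, hHP, lie_self, wedge_zero',
      zero_wedge', wedge_neg', neg_wedge', wedge_smul_left', wedge_smul_right', smul_neg,
      smul_zero, neg_zero, add_zero, zero_add, sub_zero, zero_sub, neg_neg]
    all_goals simp only [wedge]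
    all_goals module
  have hdM : cobdry L r M = 0 := by
    rw [cobdry_apply', hr]
    simp only [map_add, map_sub, map_neg, map_smul, act_wedge', hDP, hDK, hKP, hDH, hDC, hHC, hKH, hPC, hKC, hPH, hM, hM', hPD, hKD, hPK, hHD, hCD, hCH, hHK, hCP, hCK, hHP, lie_self, wedge_zero',
      zero_wedge', wedge_neg', neg_wedge', wedge_smul_left', wedge_smul_right', smul_neg,
      smul_zero, neg_zero, add_zero, zero_add, sub_zero, zero_sub, neg_neg]
    all_goals simp only [wedge]
    all_goals module
  have hdH : cobdry L r H = (2*alphap) • wedge L P H +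
      alpham • (wedge L D P + (2:ℝ) • wedge L K H) - betam • wedge L P M -
      (2*th) • wedge L H M := by
    rw [cobdry_apply', hr]
    simp only [map_add, map_sub, map_neg, map_smul, act_wedge', hDP, hDK, hKP, hDH, hDC, hHC, hKH, hPC, hKC, hPH, hM, hM', hPD, hKD, hPK, hHD, hCD, hCH, hHK, hCP, hCK, hHP, lie_self, wedge_zero',
      zero_wedge', wedge_neg', neg_wedge', wedge_smul_left', wedge_smul_right', smul_neg,
      smul_zero, neg_zero, add_zero, zero_add, sub_zero, zero_sub, neg_neg]
    all_goals simp only [wedge]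
    all_goals module
  have hdC : cobdry L r C = -((2*alpham) • wedge L K C) -
      alphap • (wedge L D K + (2:ℝ) • wedge L P C) + betap • wedge L K M +
      (2*th) • wedge L C M := by
    rw [cobdry_apply', hr]
    simp only [map_add, map_sub, map_neg, map_smul, act_wedge', hDP, hDK, hKP, hDH, hDC, hHC, hKH, hPC, hKC, hPH, hM, hM', hPD, hKD, hPK, hHD, hCD, hCH, hHK, hCP, hCK, hHP, lie_self, wedge_zero',
      zero_wedge', wedge_neg', neg_wedge', wedge_smul_left', wedge_smul_right', smul_neg,
      smul_zero, neg_zero, add_zero, zero_add, sub_zero, zero_sub, neg_neg]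
    all_goals simp only [wedge]
    all_goals module
  have hskew : ∀ X : L, cobdry L r X ∈ skewPart L := by
    intro X
    rw [cobdry_apply']
    apply act_skew'
    rw [hr]
    have mem : ∀ (a b : L) (c : ℝ), c • wedge L a b ∈ skewPart L := fun a b c =>
      Submodule.smul_mem _ _ (Submodule.subset_span ⟨a, b, rfl⟩)
    exact add_mem (sub_mem (add_mem (add_mem (sub_mem (neg_mem (mem _ _ _)) (mem _ _ _))
      (mem _ _ _)) (mem _ _ _)) (mem _ _ _)) (mem _ _ _)
  have hcoc : IsCocycle L (cobdry L r) := by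
    intro X Y
    rw [cobdry_apply', cobdry_apply', cobdry_apply', act_lie']
    simp only [LinearMap.sub_apply, LinearMap.comp_apply]
  have hcjD : ((LinearMap.id : ((L ⊗[ℝ] L) ⊗[ℝ] L) →ₗ[ℝ] ((L ⊗[ℝ] L) ⊗[ℝ] L)) + zeta L + zeta L ∘ₗ zeta L)
      (LinearMap.rTensor L (cobdry L r) ((cobdry L r) D)) = 0 := by
    simp only [hdD, hdP, hdK, hdM, hdH, hdC, wedge, map_add, map_sub, map_neg, map_smul,
      sub_tmul, add_tmul, neg_tmul, ← smul_tmul', tmul_sub, tmul_add, tmul_neg, tmul_smul,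
      LinearMap.rTensor_tmul, LinearMap.add_apply, LinearMap.comp_apply, LinearMap.id_apply,
      zeta_tmul', map_zero, zero_tmul, tmul_zero]
    all_goals rcases hsplit with ⟨ha, hb⟩ | ⟨ha, hb⟩ | ⟨ha, hb⟩ <;> subst ha <;> subst hb <;>
      match_scalars <;> ring1
  have hcjP : ((LinearMap.id : ((L ⊗[ℝ] L) ⊗[ℝ] L) →ₗ[ℝ] ((L ⊗[ℝ] L) ⊗[ℝ] L)) + zeta L + zeta L ∘ₗ zeta L)
      (LinearMap.rTensor L (cobdry L r) ((cobdry L r) P)) = 0 := by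
    simp only [hdD, hdP, hdK, hdM, hdH, hdC, wedge, map_add, map_sub, map_neg, map_smul,
      sub_tmul, add_tmul, neg_tmul, ← smul_tmul', tmul_sub, tmul_add, tmul_neg, tmul_smul,
      LinearMap.rTensor_tmul, LinearMap.add_apply, LinearMap.comp_apply, LinearMap.id_apply,
      zeta_tmul', map_zero, zero_tmul, tmul_zero]
    all_goals rcases hsplit with ⟨ha, hb⟩ | ⟨ha, hb⟩ | ⟨ha, hb⟩ <;> subst ha <;> subst hb <;>
      match_scalars <;> ring1
  have hcjK : ((LinearMap.id : ((L ⊗[ℝ] L) ⊗[ℝ] L) →ₗ[ℝ] ((L ⊗[ℝ] L) ⊗[ℝ] L)) + zeta L + zeta L ∘ₗ zeta L)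
      (LinearMap.rTensor L (cobdry L r) ((cobdry L r) K)) = 0 := by
    simp only [hdD, hdP, hdK, hdM, hdH, hdC, wedge, map_add, map_sub, map_neg, map_smul,
      sub_tmul, add_tmul, neg_tmul, ← smul_tmul', tmul_sub, tmul_add, tmul_neg, tmul_smul,
      LinearMap.rTensor_tmul, LinearMap.add_apply, LinearMap.comp_apply, LinearMap.id_apply,
      zeta_tmul', map_zero, zero_tmul, tmul_zero]
    all_goals rcases hsplit with ⟨ha, hb⟩ | ⟨ha, hb⟩ | ⟨ha, hb⟩ <;> subst ha <;> subst hb <;>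
      match_scalars <;> ring1
  have hcjM : ((LinearMap.id : ((L ⊗[ℝ] L) ⊗[ℝ] L) →ₗ[ℝ] ((L ⊗[ℝ] L) ⊗[ℝ] L)) + zeta L + zeta L ∘ₗ zeta L)
      (LinearMap.rTensor L (cobdry L r) ((cobdry L r) M)) = 0 := by
    simp only [hdD, hdP, hdK, hdM, hdH, hdC, wedge, map_add, map_sub, map_neg, map_smul,
      sub_tmul, add_tmul, neg_tmul, ← smul_tmul', tmul_sub, tmul_add, tmul_neg, tmul_smul,
      LinearMap.rTensor_tmul, LinearMap.add_apply, LinearMap.comp_apply, LinearMap.id_apply,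
      zeta_tmul', map_zero, zero_tmul, tmul_zero]
    all_goals rcases hsplit with ⟨ha, hb⟩ | ⟨ha, hb⟩ | ⟨ha, hb⟩ <;> subst ha <;> subst hb <;>
      match_scalars <;> ring1
  have hcjH : ((LinearMap.id : ((L ⊗[ℝ] L) ⊗[ℝ] L) →ₗ[ℝ] ((L ⊗[ℝ] L) ⊗[ℝ] L)) + zeta L + zeta L ∘ₗ zeta L)
      (LinearMap.rTensor L (cobdry L r) ((cobdry L r) H)) = 0 := by
    simp only [hdD, hdP, hdK, hdM, hdH, hdC, wedge, map_add, map_sub, map_neg, map_smul,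
      sub_tmul, add_tmul, neg_tmul, ← smul_tmul', tmul_sub, tmul_add, tmul_neg, tmul_smul,
      LinearMap.rTensor_tmul, LinearMap.add_apply, LinearMap.comp_apply, LinearMap.id_apply,
      zeta_tmul', map_zero, zero_tmul, tmul_zero]
    all_goals rcases hsplit with ⟨ha, hb⟩ | ⟨ha, hb⟩ | ⟨ha, hb⟩ <;> subst ha <;> subst hb <;>
      match_scalars <;> ring1
  have hcjC : ((LinearMap.id : ((L ⊗[ℝ] L) ⊗[ℝ] L) →ₗ[ℝ] ((L ⊗[ℝ] L) ⊗[ℝ] L)) + zeta L + zeta L ∘ₗ zeta L)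
      (LinearMap.rTensor L (cobdry L r) ((cobdry L r) C)) = 0 := by
    simp only [hdD, hdP, hdK, hdM, hdH, hdC, wedge, map_add, map_sub, map_neg, map_smul,
      sub_tmul, add_tmul, neg_tmul, ← smul_tmul', tmul_sub, tmul_add, tmul_neg, tmul_smul,
      LinearMap.rTensor_tmul, LinearMap.add_apply, LinearMap.comp_apply, LinearMap.id_apply,
      zeta_tmul', map_zero, zero_tmul, tmul_zero]
    all_goals rcases hsplit with ⟨ha, hb⟩ | ⟨ha, hb⟩ | ⟨ha, hb⟩ <;> subst ha <;> subst hb <;>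
      match_scalars <;> ring1
  have hcj : CoJacobi L (cobdry L r) := by
    have hF : ((((LinearMap.id : ((L ⊗[ℝ] L) ⊗[ℝ] L) →ₗ[ℝ] ((L ⊗[ℝ] L) ⊗[ℝ] L)) + zeta L + zeta L ∘ₗ zeta L).comp
        (LinearMap.rTensor L (cobdry L r))).comp (cobdry L r)) = 0 := by
      apply Module.Basis.ext B
      intro i
      fin_cases i <;>
        simp only [LinearMap.comp_apply, LinearMap.zero_apply, hB]
      · show ((LinearMap.id : ((L ⊗[ℝ] L) ⊗[ℝ] L) →ₗ[ℝ] ((L ⊗[ℝ] L) ⊗[ℝ] L)) + zeta L + zeta L ∘ₗ zeta L)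
            (LinearMap.rTensor L (cobdry L r) ((cobdry L r) D)) = 0
        exact hcjD
      · show ((LinearMap.id : ((L ⊗[ℝ] L) ⊗[ℝ] L) →ₗ[ℝ] ((L ⊗[ℝ] L) ⊗[ℝ] L)) + zeta L + zeta L ∘ₗ zeta L)
            (LinearMap.rTensor L (cobdry L r) ((cobdry L r) H)) = 0
        exact hcjH
      · show ((LinearMap.id : ((L ⊗[ℝ] L) ⊗[ℝ] L) →ₗ[ℝ] ((L ⊗[ℝ] L) ⊗[ℝ] L)) + zeta L + zeta L ∘ₗ zeta L)
            (LinearMap.rTensor L (cobdry L r) ((cobdry L r) P)) = 0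
        exact hcjP
      · show ((LinearMap.id : ((L ⊗[ℝ] L) ⊗[ℝ] L) →ₗ[ℝ] ((L ⊗[ℝ] L) ⊗[ℝ] L)) + zeta L + zeta L ∘ₗ zeta L)
            (LinearMap.rTensor L (cobdry L r) ((cobdry L r) K)) = 0
        exact hcjK
      · show ((LinearMap.id : ((L ⊗[ℝ] L) ⊗[ℝ] L) →ₗ[ℝ] ((L ⊗[ℝ] L) ⊗[ℝ] L)) + zeta L + zeta L ∘ₗ zeta L)
            (LinearMap.rTensor L (cobdry L r) ((cobdry L r) C)) = 0
        exact hcjC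
      · show ((LinearMap.id : ((L ⊗[ℝ] L) ⊗[ℝ] L) →ₗ[ℝ] ((L ⊗[ℝ] L) ⊗[ℝ] L)) + zeta L + zeta L ∘ₗ zeta L)
            (LinearMap.rTensor L (cobdry L r) ((cobdry L r) M)) = 0
        exact hcjM
    intro X
    have h := LinearMap.congr_fun hF X
    simpa only [LinearMap.comp_apply, LinearMap.zero_apply] using h
  have hrB : r = -(alphap • wedge L (B 0) (B 2)) - alpham • wedge L (B 0) (B 3) +
      betap • wedge L (B 2) (B 5) + betam • wedge L (B 3) (B 5) - th • wedge L (B 0) (B 5) +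
      xi • wedge L (B 2) (B 3) := by
    rw [hB0, hB2, hB3, hB5]; exact hr
  have hc00 : ((B.tensorProduct B).repr r) ((0 : Fin 6), (0 : Fin 6)) = 0 := by
    rw [hrB]
    simp [wedge, basisTP', map_add, map_sub, map_smul, map_neg, Finsupp.coe_add,
      Finsupp.coe_sub, Finsupp.coe_smul, Finsupp.coe_neg, Pi.add_apply, Pi.sub_apply,
      Pi.smul_apply, Pi.neg_apply, -Prod.mk_zero_zero, -Prod.mk_one_one]
  have hc01 : ((B.tensorProduct B).repr r) ((0 : Fin 6), (1 : Fin 6)) = 0 := by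
    rw [hrB]
    simp [wedge, basisTP', map_add, map_sub, map_smul, map_neg, Finsupp.coe_add,
      Finsupp.coe_sub, Finsupp.coe_smul, Finsupp.coe_neg, Pi.add_apply, Pi.sub_apply,
      Pi.smul_apply, Pi.neg_apply, -Prod.mk_zero_zero, -Prod.mk_one_one]
  have hc02 : ((B.tensorProduct B).repr r) ((0 : Fin 6), (2 : Fin 6)) = -alphap := by
    rw [hrB]
    simp [wedge, basisTP', map_add, map_sub, map_smul, map_neg, Finsupp.coe_add,
      Finsupp.coe_sub, Finsupp.coe_smul, Finsupp.coe_neg, Pi.add_apply, Pi.sub_apply,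
      Pi.smul_apply, Pi.neg_apply, -Prod.mk_zero_zero, -Prod.mk_one_one]
  have hc03 : ((B.tensorProduct B).repr r) ((0 : Fin 6), (3 : Fin 6)) = -alpham := by
    rw [hrB]
    simp [wedge, basisTP', map_add, map_sub, map_smul, map_neg, Finsupp.coe_add,
      Finsupp.coe_sub, Finsupp.coe_smul, Finsupp.coe_neg, Pi.add_apply, Pi.sub_apply,
      Pi.smul_apply, Pi.neg_apply, -Prod.mk_zero_zero, -Prod.mk_one_one]
  have hc04 : ((B.tensorProduct B).repr r) ((0 : Fin 6), (4 : Fin 6)) = 0 := by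
    rw [hrB]
    simp [wedge, basisTP', map_add, map_sub, map_smul, map_neg, Finsupp.coe_add,
      Finsupp.coe_sub, Finsupp.coe_smul, Finsupp.coe_neg, Pi.add_apply, Pi.sub_apply,
      Pi.smul_apply, Pi.neg_apply, -Prod.mk_zero_zero, -Prod.mk_one_one]
  have hc05 : ((B.tensorProduct B).repr r) ((0 : Fin 6), (5 : Fin 6)) = -th := by
    rw [hrB]
    simp [wedge, basisTP', map_add, map_sub, map_smul, map_neg, Finsupp.coe_add,
      Finsupp.coe_sub, Finsupp.coe_smul, Finsupp.coe_neg, Pi.add_apply, Pi.sub_apply,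
      Pi.smul_apply, Pi.neg_apply, -Prod.mk_zero_zero, -Prod.mk_one_one]
  have hc10 : ((B.tensorProduct B).repr r) ((1 : Fin 6), (0 : Fin 6)) = 0 := by
    rw [hrB]
    simp [wedge, basisTP', map_add, map_sub, map_smul, map_neg, Finsupp.coe_add,
      Finsupp.coe_sub, Finsupp.coe_smul, Finsupp.coe_neg, Pi.add_apply, Pi.sub_apply,
      Pi.smul_apply, Pi.neg_apply, -Prod.mk_zero_zero, -Prod.mk_one_one]
  have hc11 : ((B.tensorProduct B).repr r) ((1 : Fin 6), (1 : Fin 6)) = 0 := by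
    rw [hrB]
    simp [wedge, basisTP', map_add, map_sub, map_smul, map_neg, Finsupp.coe_add,
      Finsupp.coe_sub, Finsupp.coe_smul, Finsupp.coe_neg, Pi.add_apply, Pi.sub_apply,
      Pi.smul_apply, Pi.neg_apply, -Prod.mk_zero_zero, -Prod.mk_one_one]
  have hc12 : ((B.tensorProduct B).repr r) ((1 : Fin 6), (2 : Fin 6)) = 0 := by
    rw [hrB]
    simp [wedge, basisTP', map_add, map_sub, map_smul, map_neg, Finsupp.coe_add,
      Finsupp.coe_sub, Finsupp.coe_smul, Finsupp.coe_neg, Pi.add_apply, Pi.sub_apply,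
      Pi.smul_apply, Pi.neg_apply, -Prod.mk_zero_zero, -Prod.mk_one_one]
  have hc13 : ((B.tensorProduct B).repr r) ((1 : Fin 6), (3 : Fin 6)) = 0 := by
    rw [hrB]
    simp [wedge, basisTP', map_add, map_sub, map_smul, map_neg, Finsupp.coe_add,
      Finsupp.coe_sub, Finsupp.coe_smul, Finsupp.coe_neg, Pi.add_apply, Pi.sub_apply,
      Pi.smul_apply, Pi.neg_apply, -Prod.mk_zero_zero, -Prod.mk_one_one]
  have hc14 : ((B.tensorProduct B).repr r) ((1 : Fin 6), (4 : Fin 6)) = 0 := by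
    rw [hrB]
    simp [wedge, basisTP', map_add, map_sub, map_smul, map_neg, Finsupp.coe_add,
      Finsupp.coe_sub, Finsupp.coe_smul, Finsupp.coe_neg, Pi.add_apply, Pi.sub_apply,
      Pi.smul_apply, Pi.neg_apply, -Prod.mk_zero_zero, -Prod.mk_one_one]
  have hc15 : ((B.tensorProduct B).repr r) ((1 : Fin 6), (5 : Fin 6)) = 0 := by
    rw [hrB]
    simp [wedge, basisTP', map_add, map_sub, map_smul, map_neg, Finsupp.coe_add,
      Finsupp.coe_sub, Finsupp.coe_smul, Finsupp.coe_neg, Pi.add_apply, Pi.sub_apply,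
      Pi.smul_apply, Pi.neg_apply, -Prod.mk_zero_zero, -Prod.mk_one_one]
  have hc20 : ((B.tensorProduct B).repr r) ((2 : Fin 6), (0 : Fin 6)) = alphap := by
    rw [hrB]
    simp [wedge, basisTP', map_add, map_sub, map_smul, map_neg, Finsupp.coe_add,
      Finsupp.coe_sub, Finsupp.coe_smul, Finsupp.coe_neg, Pi.add_apply, Pi.sub_apply,
      Pi.smul_apply, Pi.neg_apply, -Prod.mk_zero_zero, -Prod.mk_one_one]
  have hc21 : ((B.tensorProduct B).repr r) ((2 : Fin 6), (1 : Fin 6)) = 0 := by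
    rw [hrB]
    simp [wedge, basisTP', map_add, map_sub, map_smul, map_neg, Finsupp.coe_add,
      Finsupp.coe_sub, Finsupp.coe_smul, Finsupp.coe_neg, Pi.add_apply, Pi.sub_apply,
      Pi.smul_apply, Pi.neg_apply, -Prod.mk_zero_zero, -Prod.mk_one_one]
  have hc22 : ((B.tensorProduct B).repr r) ((2 : Fin 6), (2 : Fin 6)) = 0 := by
    rw [hrB]
    simp [wedge, basisTP', map_add, map_sub, map_smul, map_neg, Finsupp.coe_add,
      Finsupp.coe_sub, Finsupp.coe_smul, Finsupp.coe_neg, Pi.add_apply, Pi.sub_apply,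
      Pi.smul_apply, Pi.neg_apply, -Prod.mk_zero_zero, -Prod.mk_one_one]
  have hc23 : ((B.tensorProduct B).repr r) ((2 : Fin 6), (3 : Fin 6)) = xi := by
    rw [hrB]
    simp [wedge, basisTP', map_add, map_sub, map_smul, map_neg, Finsupp.coe_add,
      Finsupp.coe_sub, Finsupp.coe_smul, Finsupp.coe_neg, Pi.add_apply, Pi.sub_apply,
      Pi.smul_apply, Pi.neg_apply, -Prod.mk_zero_zero, -Prod.mk_one_one]
  have hc24 : ((B.tensorProduct B).repr r) ((2 : Fin 6), (4 : Fin 6)) = 0 := by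
    rw [hrB]
    simp [wedge, basisTP', map_add, map_sub, map_smul, map_neg, Finsupp.coe_add,
      Finsupp.coe_sub, Finsupp.coe_smul, Finsupp.coe_neg, Pi.add_apply, Pi.sub_apply,
      Pi.smul_apply, Pi.neg_apply, -Prod.mk_zero_zero, -Prod.mk_one_one]
  have hc25 : ((B.tensorProduct B).repr r) ((2 : Fin 6), (5 : Fin 6)) = betap := by
    rw [hrB]
    simp [wedge, basisTP', map_add, map_sub, map_smul, map_neg, Finsupp.coe_add,
      Finsupp.coe_sub, Finsupp.coe_smul, Finsupp.coe_neg, Pi.add_apply, Pi.sub_apply,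
      Pi.smul_apply, Pi.neg_apply, -Prod.mk_zero_zero, -Prod.mk_one_one]
  have hc30 : ((B.tensorProduct B).repr r) ((3 : Fin 6), (0 : Fin 6)) = alpham := by
    rw [hrB]
    simp [wedge, basisTP', map_add, map_sub, map_smul, map_neg, Finsupp.coe_add,
      Finsupp.coe_sub, Finsupp.coe_smul, Finsupp.coe_neg, Pi.add_apply, Pi.sub_apply,
      Pi.smul_apply, Pi.neg_apply, -Prod.mk_zero_zero, -Prod.mk_one_one]
  have hc31 : ((B.tensorProduct B).repr r) ((3 : Fin 6), (1 : Fin 6)) = 0 := by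
    rw [hrB]
    simp [wedge, basisTP', map_add, map_sub, map_smul, map_neg, Finsupp.coe_add,
      Finsupp.coe_sub, Finsupp.coe_smul, Finsupp.coe_neg, Pi.add_apply, Pi.sub_apply,
      Pi.smul_apply, Pi.neg_apply, -Prod.mk_zero_zero, -Prod.mk_one_one]
  have hc32 : ((B.tensorProduct B).repr r) ((3 : Fin 6), (2 : Fin 6)) = -xi := by
    rw [hrB]
    simp [wedge, basisTP', map_add, map_sub, map_smul, map_neg, Finsupp.coe_add,
      Finsupp.coe_sub, Finsupp.coe_smul, Finsupp.coe_neg, Pi.add_apply, Pi.sub_apply,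
      Pi.smul_apply, Pi.neg_apply, -Prod.mk_zero_zero, -Prod.mk_one_one]
  have hc33 : ((B.tensorProduct B).repr r) ((3 : Fin 6), (3 : Fin 6)) = 0 := by
    rw [hrB]
    simp [wedge, basisTP', map_add, map_sub, map_smul, map_neg, Finsupp.coe_add,
      Finsupp.coe_sub, Finsupp.coe_smul, Finsupp.coe_neg, Pi.add_apply, Pi.sub_apply,
      Pi.smul_apply, Pi.neg_apply, -Prod.mk_zero_zero, -Prod.mk_one_one]
  have hc34 : ((B.tensorProduct B).repr r) ((3 : Fin 6), (4 : Fin 6)) = 0 := by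
    rw [hrB]
    simp [wedge, basisTP', map_add, map_sub, map_smul, map_neg, Finsupp.coe_add,
      Finsupp.coe_sub, Finsupp.coe_smul, Finsupp.coe_neg, Pi.add_apply, Pi.sub_apply,
      Pi.smul_apply, Pi.neg_apply, -Prod.mk_zero_zero, -Prod.mk_one_one]
  have hc35 : ((B.tensorProduct B).repr r) ((3 : Fin 6), (5 : Fin 6)) = betam := by
    rw [hrB]
    simp [wedge, basisTP', map_add, map_sub, map_smul, map_neg, Finsupp.coe_add,
      Finsupp.coe_sub, Finsupp.coe_smul, Finsupp.coe_neg, Pi.add_apply, Pi.sub_apply,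
      Pi.smul_apply, Pi.neg_apply, -Prod.mk_zero_zero, -Prod.mk_one_one]
  have hc40 : ((B.tensorProduct B).repr r) ((4 : Fin 6), (0 : Fin 6)) = 0 := by
    rw [hrB]
    simp [wedge, basisTP', map_add, map_sub, map_smul, map_neg, Finsupp.coe_add,
      Finsupp.coe_sub, Finsupp.coe_smul, Finsupp.coe_neg, Pi.add_apply, Pi.sub_apply,
      Pi.smul_apply, Pi.neg_apply, -Prod.mk_zero_zero, -Prod.mk_one_one]
  have hc41 : ((B.tensorProduct B).repr r) ((4 : Fin 6), (1 : Fin 6)) = 0 := by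
    rw [hrB]
    simp [wedge, basisTP', map_add, map_sub, map_smul, map_neg, Finsupp.coe_add,
      Finsupp.coe_sub, Finsupp.coe_smul, Finsupp.coe_neg, Pi.add_apply, Pi.sub_apply,
      Pi.smul_apply, Pi.neg_apply, -Prod.mk_zero_zero, -Prod.mk_one_one]
  have hc42 : ((B.tensorProduct B).repr r) ((4 : Fin 6), (2 : Fin 6)) = 0 := by
    rw [hrB]
    simp [wedge, basisTP', map_add, map_sub, map_smul, map_neg, Finsupp.coe_add,
      Finsupp.coe_sub, Finsupp.coe_smul, Finsupp.coe_neg, Pi.add_apply, Pi.sub_apply,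
      Pi.smul_apply, Pi.neg_apply, -Prod.mk_zero_zero, -Prod.mk_one_one]
  have hc43 : ((B.tensorProduct B).repr r) ((4 : Fin 6), (3 : Fin 6)) = 0 := by
    rw [hrB]
    simp [wedge, basisTP', map_add, map_sub, map_smul, map_neg, Finsupp.coe_add,
      Finsupp.coe_sub, Finsupp.coe_smul, Finsupp.coe_neg, Pi.add_apply, Pi.sub_apply,
      Pi.smul_apply, Pi.neg_apply, -Prod.mk_zero_zero, -Prod.mk_one_one]
  have hc44 : ((B.tensorProduct B).repr r) ((4 : Fin 6), (4 : Fin 6)) = 0 := by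
    rw [hrB]
    simp [wedge, basisTP', map_add, map_sub, map_smul, map_neg, Finsupp.coe_add,
      Finsupp.coe_sub, Finsupp.coe_smul, Finsupp.coe_neg, Pi.add_apply, Pi.sub_apply,
      Pi.smul_apply, Pi.neg_apply, -Prod.mk_zero_zero, -Prod.mk_one_one]
  have hc45 : ((B.tensorProduct B).repr r) ((4 : Fin 6), (5 : Fin 6)) = 0 := by
    rw [hrB]
    simp [wedge, basisTP', map_add, map_sub, map_smul, map_neg, Finsupp.coe_add,
      Finsupp.coe_sub, Finsupp.coe_smul, Finsupp.coe_neg, Pi.add_apply, Pi.sub_apply,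
      Pi.smul_apply, Pi.neg_apply, -Prod.mk_zero_zero, -Prod.mk_one_one]
  have hc50 : ((B.tensorProduct B).repr r) ((5 : Fin 6), (0 : Fin 6)) = th := by
    rw [hrB]
    simp [wedge, basisTP', map_add, map_sub, map_smul, map_neg, Finsupp.coe_add,
      Finsupp.coe_sub, Finsupp.coe_smul, Finsupp.coe_neg, Pi.add_apply, Pi.sub_apply,
      Pi.smul_apply, Pi.neg_apply, -Prod.mk_zero_zero, -Prod.mk_one_one]
  have hc51 : ((B.tensorProduct B).repr r) ((5 : Fin 6), (1 : Fin 6)) = 0 := by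
    rw [hrB]
    simp [wedge, basisTP', map_add, map_sub, map_smul, map_neg, Finsupp.coe_add,
      Finsupp.coe_sub, Finsupp.coe_smul, Finsupp.coe_neg, Pi.add_apply, Pi.sub_apply,
      Pi.smul_apply, Pi.neg_apply, -Prod.mk_zero_zero, -Prod.mk_one_one]
  have hc52 : ((B.tensorProduct B).repr r) ((5 : Fin 6), (2 : Fin 6)) = -betap := by
    rw [hrB]
    simp [wedge, basisTP', map_add, map_sub, map_smul, map_neg, Finsupp.coe_add,
      Finsupp.coe_sub, Finsupp.coe_smul, Finsupp.coe_neg, Pi.add_apply, Pi.sub_apply,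
      Pi.smul_apply, Pi.neg_apply, -Prod.mk_zero_zero, -Prod.mk_one_one]
  have hc53 : ((B.tensorProduct B).repr r) ((5 : Fin 6), (3 : Fin 6)) = -betam := by
    rw [hrB]
    simp [wedge, basisTP', map_add, map_sub, map_smul, map_neg, Finsupp.coe_add,
      Finsupp.coe_sub, Finsupp.coe_smul, Finsupp.coe_neg, Pi.add_apply, Pi.sub_apply,
      Pi.smul_apply, Pi.neg_apply, -Prod.mk_zero_zero, -Prod.mk_one_one]
  have hc54 : ((B.tensorProduct B).repr r) ((5 : Fin 6), (4 : Fin 6)) = 0 := by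
    rw [hrB]
    simp [wedge, basisTP', map_add, map_sub, map_smul, map_neg, Finsupp.coe_add,
      Finsupp.coe_sub, Finsupp.coe_smul, Finsupp.coe_neg, Pi.add_apply, Pi.sub_apply,
      Pi.smul_apply, Pi.neg_apply, -Prod.mk_zero_zero, -Prod.mk_one_one]
  have hc55 : ((B.tensorProduct B).repr r) ((5 : Fin 6), (5 : Fin 6)) = 0 := by
    rw [hrB]
    simp [wedge, basisTP', map_add, map_sub, map_smul, map_neg, Finsupp.coe_add,
      Finsupp.coe_sub, Finsupp.coe_smul, Finsupp.coe_neg, Pi.add_apply, Pi.sub_apply,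
      Pi.smul_apply, Pi.neg_apply, -Prod.mk_zero_zero, -Prod.mk_one_one]
  have hsch : schouten L B r = (alphap*betam + alpham*betap - xi^2) • wedge3 L K M P := by
    simp only [schouten, Fin.sum_univ_six, hc00, hc01, hc02, hc03, hc04, hc05, hc10, hc11, hc12, hc13, hc14, hc15, hc20, hc21, hc22, hc23, hc24, hc25, hc30, hc31, hc32, hc33, hc34, hc35, hc40, hc41, hc42, hc43, hc44, hc45, hc50, hc51, hc52, hc53, hc54, hc55, zero_mul, mul_zero, zero_smul,
      add_zero, zero_add]
    simp only [hB0, hB1, hB2, hB3, hB4, hB5, hDP, hDK, hKP, hDH, hDC, hHC, hKH, hPC, hKC, hPH, hM, hM', hPD, hKD, hPK, hHD, hCD, hCH, hHK, hCP, hCK, hHP, lie_self]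
    simp only [wedge3, zero_tmul, tmul_zero, ← smul_tmul', tmul_smul, smul_zero, add_zero,
      zero_add, neg_tmul, tmul_neg]
    all_goals rcases hsplit with ⟨ha, hb⟩ | ⟨ha, hb⟩ | ⟨ha, hb⟩ <;> subst ha <;> subst hb <;>
      match_scalars <;> ring1
  exact ⟨⟨hskew, hcoc, hcj⟩, hdD, hdP, hdK, hdM, hdH, hdC, hsch⟩
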